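/- If 0 < x_1 < ... < x_{n+1} < 1, the multipliers of the Neville elimination of the Bernstein–Vandermonde matrix A, defined as m_{i,j} = p_{i,j}/p_{i-1,j} where p_{i,j} = det A[i-j+1,...,i | 1,...,j] / det A[i-j+1,...,i-1 | 1,...,j-1], satisfy m_{i,j} = (1-x_i)^{n-j+1}·(1-x_{i-j})·Π_{k=1}^{j-1}(x_i - x_{i-k}) / ( (1-x_{i-1})^{n-j+2}·Π_{k=2}^{j}(x_{i-1} - x_{i-k}) ) for 1 ≤ j ≤ n and j+1 ≤ i ≤ n+1. -/

import Mathlib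

/-- Minor of the Bernstein–Vandermonde matrix with rows r,...,r+j-1 and columns 1,...,j
(1-based paper indexing; column c of the matrix corresponds to Bernstein index c-1). -/
noncomputable def bvMinor (n : ℕ) (x : ℕ → ℝ) (r j : ℕ) : ℝ :=
  (Matrix.of fun a c : Fin j =>
    (n.choose c : ℝ) * (1 - x (r + (a : ℕ))) ^ (n - (c : ℕ)) * x (r + (a : ℕ)) ^ (c : ℕ)).det

open Finset

lemma prod_pairs_succ (h : ℕ → ℕ → ℝ) (j : ℕ) :
    ∏ a ∈ range (j+1), ∏ b ∈ Ico (a+1) (j+1), h a b =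
      (∏ a ∈ range j, ∏ b ∈ Ico (a+1) j, h a b) * ∏ a ∈ range j, h a j := by
  rw [Finset.prod_range_succ, Finset.Ico_self, Finset.prod_empty, mul_one,
    ← Finset.prod_mul_distrib]
  refine Finset.prod_congr rfl fun a ha => ?_
  exact Finset.prod_Ico_succ_top (Nat.succ_le_of_lt (Finset.mem_range.mp ha)) _

lemma prod_pairs_mul (g : ℕ → ℝ) : ∀ j : ℕ,
    ∏ a ∈ range j, ∏ b ∈ Ico (a+1) j, (g a * g b) = (∏ a ∈ range j, g a) ^ (j - 1)
  | 0 => by simp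
  | (j+1) => by
    rw [prod_pairs_succ, prod_pairs_mul g j, Finset.prod_mul_distrib, Finset.prod_const,
      Finset.card_range, Finset.prod_range_succ, mul_pow, Nat.add_sub_cancel]
    cases j with
    | zero => simp
    | succ k =>
      rw [Nat.succ_sub_one]
      ring

lemma fin_pairs (f : ℕ → ℕ → ℝ) (j : ℕ) :
    ∏ a : Fin j, ∏ b ∈ Finset.Ioi a, f ↑a ↑b =
      ∏ a ∈ range j, ∏ b ∈ Ico (a+1) j, f a b := by
  have h1 : ∀ a : Fin j, ∏ b ∈ Finset.Ioi a, f ↑a ↑b = ∏ b ∈ Ico ((a:ℕ)+1) j, f ↑a b := by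
    intro a
    have : Finset.Ico ((a:ℕ)+1) j = (Finset.Ioi a).map Fin.valEmbedding := by
      rw [Fin.map_valEmbedding_Ioi]
      ext k
      have := a.isLt
      simp only [Finset.mem_Ico, Finset.mem_Ioo]
      omega
    rw [this, Finset.prod_map]
    rfl
  simp_rw [h1]
  exact Fin.prod_univ_eq_prod_range (fun a => ∏ b ∈ Ico (a+1) j, f a b) j

lemma bvMinor_eq (n : ℕ) (x : ℕ → ℝ) (r j : ℕ) (hj : j ≤ n + 1)
    (h : ∀ a, a < j → 1 - x (r + a) ≠ 0) :
    bvMinor n x r j =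
      (∏ c ∈ range j, (n.choose c : ℝ)) *
        (∏ a ∈ range j, (1 - x (r + a))) ^ (n + 1 - j) *
        ∏ a ∈ range j, ∏ b ∈ Ico (a+1) j, (x (r + b) - x (r + a)) := by
  rcases Nat.eq_zero_or_pos j with rfl | hj0
  · simp [bvMinor, Matrix.det_fin_zero]
  have key : bvMinor n x r j =
      (∏ c : Fin j, (n.choose (c:ℕ) : ℝ)) *
        ((∏ a : Fin j, (1 - x (r + (a:ℕ))) ^ n) *
          (Matrix.vandermonde fun a : Fin j => x (r + (a:ℕ)) / (1 - x (r + (a:ℕ)))).det) := by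
    rw [bvMinor, show (Matrix.of fun a c : Fin j =>
        (n.choose (c:ℕ) : ℝ) * (1 - x (r + (a:ℕ))) ^ (n - (c:ℕ)) * x (r + (a:ℕ)) ^ (c:ℕ)) =
        Matrix.of (fun a c : Fin j => (n.choose (c:ℕ) : ℝ) *
          Matrix.of (fun a c : Fin j => (1 - x (r + (a:ℕ))) ^ n *
            Matrix.vandermonde (fun a : Fin j => x (r + (a:ℕ)) / (1 - x (r + (a:ℕ)))) a c) a c)
        from ?_, Matrix.det_mul_row, Matrix.det_mul_column]
    ext a c
    have hu := h a a.isLt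
    have hc : (c : ℕ) ≤ n := by have := c.isLt; omega
    simp only [Matrix.of_apply, Matrix.vandermonde_apply]
    rw [div_pow, pow_sub₀ _ hu hc, div_eq_mul_inv]
    ring
  rw [key, Matrix.det_vandermonde]
  have hdiff : ∀ a b : ℕ, a < j → b < j →
      x (r + b) / (1 - x (r + b)) - x (r + a) / (1 - x (r + a)) =
        (x (r + b) - x (r + a)) / ((1 - x (r + a)) * (1 - x (r + b))) := by
    intro a b ha hb
    have ha' := h a ha
    have hb' := h b hb
    field_simp
    ring
  have hvdm : (∏ a : Fin j, ∏ b ∈ Finset.Ioi a,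
        ((fun a : Fin j => x (r + (a:ℕ)) / (1 - x (r + (a:ℕ)))) b -
         (fun a : Fin j => x (r + (a:ℕ)) / (1 - x (r + (a:ℕ)))) a)) =
      (∏ a ∈ range j, ∏ b ∈ Ico (a+1) j, (x (r + b) - x (r + a))) /
        (∏ a ∈ range j, (1 - x (r + a))) ^ (j - 1) := by
    rw [fin_pairs (fun a b => x (r + b) / (1 - x (r + b)) - x (r + a) / (1 - x (r + a))) j]
    rw [← prod_pairs_mul (fun a => 1 - x (r + a)) j, ← Finset.prod_div_distrib]
    refine Finset.prod_congr rfl fun a ha => ?_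
    rw [← Finset.prod_div_distrib]
    refine Finset.prod_congr rfl fun b hb => ?_
    exact hdiff a b (Finset.mem_range.mp ha) (by
      have := Finset.mem_Ico.mp hb; omega)
  rw [hvdm]
  rw [Fin.prod_univ_eq_prod_range (fun c => ((n.choose c : ℝ))) j,
    Fin.prod_univ_eq_prod_range (fun a => (1 - x (r + a)) ^ n) j,
    Finset.prod_pow]
  have hU : (∏ a ∈ range j, (1 - x (r + a))) ≠ 0 :=
    Finset.prod_ne_zero_iff.mpr fun a ha => h a (Finset.mem_range.mp ha)
  have hpow : (∏ a ∈ range j, (1 - x (r + a))) ^ (n + 1 - j) =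
      (∏ a ∈ range j, (1 - x (r + a))) ^ n *
        ((∏ a ∈ range j, (1 - x (r + a))) ^ (j - 1))⁻¹ := by
    rw [← pow_sub₀ _ hU (by omega)]
    congr 1
    omega
  rw [hpow, div_eq_mul_inv]
  ring

/-- Neville pivot p_{i,j} = det A[i-j+1..i | 1..j] / det A[i-j+1..i-1 | 1..j-1]. -/
noncomputable def bvPivot (n : ℕ) (x : ℕ → ℝ) (i j : ℕ) : ℝ :=
  bvMinor n x (i - j + 1) j / bvMinor n x (i - j + 1) (j - 1)

/-- Neville multiplier m_{i,j} = p_{i,j}/p_{i-1,j}. -/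
noncomputable def bvMult (n : ℕ) (x : ℕ → ℝ) (i j : ℕ) : ℝ :=
  bvPivot n x i j / bvPivot n x (i - 1) j

set_option maxHeartbeats 1000000 in
/-- Closed form of the multipliers of the Neville elimination of
the Bernstein–Vandermonde matrix. -/
theorem bernstein_vandermonde_multipliers (n : ℕ) (x : ℕ → ℝ)
    (hx : ∀ k, 1 ≤ k → k ≤ n + 1 → 0 < x k ∧ x k < 1)
    (hmono : ∀ k l, 1 ≤ k → k < l → l ≤ n + 1 → x k < x l)
    (i j : ℕ) (hj1 : 1 ≤ j) (hj2 : j ≤ n) (hi1 : j + 1 ≤ i) (hi2 : i ≤ n + 1) :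
    bvMult n x i j =
      (1 - x i) ^ (n + 1 - j) * (1 - x (i - j)) *
          (∏ k ∈ Finset.Icc 1 (j - 1), (x i - x (i - k))) /
        ((1 - x (i - 1)) ^ (n + 2 - j) *
          ∏ k ∈ Finset.Icc 2 j, (x (i - 1) - x (i - k))) := by
  obtain ⟨m, rfl⟩ : ∃ m, j = m + 1 := ⟨j - 1, by omega⟩
  obtain ⟨r, hr1, rfl⟩ : ∃ r, 1 ≤ r ∧ i = r + (m + 1) := ⟨i - (m + 1), by omega, by omega⟩
  have hmn : m ≤ n := by omega
  have hrm : r + (m + 1) ≤ n + 1 := hi2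
  have hne : ∀ k, 1 ≤ k → k ≤ n + 1 → 1 - x k ≠ 0 := fun k h1 h2 =>
    sub_ne_zero.mpr (ne_of_gt (hx k h1 h2).2)
  -- index normalization
  simp only [bvMult, bvPivot]
  rw [show r + (m + 1) - (m + 1) + 1 = r + 1 from by omega,
    show r + (m + 1) - 1 = r + m from by omega,
    show r + m - (m + 1) + 1 = r from by omega,
    show m + 1 - 1 = m from rfl,
    show r + (m + 1) - (m + 1) = r from by omega,
    show n + 1 - (m + 1) = n - m from by omega,
    show n + 2 - (m + 1) = (n - m) + 1 from by omega,
    show r + (m + 1) = r + 1 + m from by omega]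
  -- the four minors
  have hM1 : bvMinor n x (r + 1) (m + 1) =
      (∏ c ∈ range (m+1), (n.choose c : ℝ)) *
        ((∏ a ∈ range m, (1 - x (r + 1 + a))) * (1 - x (r + 1 + m))) ^ (n - m) *
        ((∏ a ∈ range m, ∏ b ∈ Ico (a+1) m, (x (r + 1 + b) - x (r + 1 + a))) *
          ∏ a ∈ range m, (x (r + 1 + m) - x (r + 1 + a))) := by
    rw [bvMinor_eq n x (r + 1) (m + 1) (by omega)
      (fun a ha => hne (r + 1 + a) (by omega) (by omega)),
      Finset.prod_range_succ (fun a => 1 - x (r + 1 + a)) m,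
      prod_pairs_succ (fun a b => x (r + 1 + b) - x (r + 1 + a)) m,
      show n + 1 - (m + 1) = n - m from by omega]
  have hM2 : bvMinor n x (r + 1) m =
      (∏ c ∈ range m, (n.choose c : ℝ)) *
        (∏ a ∈ range m, (1 - x (r + 1 + a))) ^ ((n - m) + 1) *
        ∏ a ∈ range m, ∏ b ∈ Ico (a+1) m, (x (r + 1 + b) - x (r + 1 + a)) := by
    rw [bvMinor_eq n x (r + 1) m (by omega)
      (fun a ha => hne (r + 1 + a) (by omega) (by omega)),
      show n + 1 - m = (n - m) + 1 from by omega]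
  have hM3 : bvMinor n x r (m + 1) =
      (∏ c ∈ range (m+1), (n.choose c : ℝ)) *
        ((∏ a ∈ range m, (1 - x (r + a))) * (1 - x (r + m))) ^ (n - m) *
        ((∏ a ∈ range m, ∏ b ∈ Ico (a+1) m, (x (r + b) - x (r + a))) *
          ∏ a ∈ range m, (x (r + m) - x (r + a))) := by
    rw [bvMinor_eq n x r (m + 1) (by omega)
      (fun a ha => hne (r + a) (by omega) (by omega)),
      Finset.prod_range_succ (fun a => 1 - x (r + a)) m,
      prod_pairs_succ (fun a b => x (r + b) - x (r + a)) m,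
      show n + 1 - (m + 1) = n - m from by omega]
  have hM4 : bvMinor n x r m =
      (∏ c ∈ range m, (n.choose c : ℝ)) *
        (∏ a ∈ range m, (1 - x (r + a))) ^ ((n - m) + 1) *
        ∏ a ∈ range m, ∏ b ∈ Ico (a+1) m, (x (r + b) - x (r + a)) := by
    rw [bvMinor_eq n x r m (by omega)
      (fun a ha => hne (r + a) (by omega) (by omega)),
      show n + 1 - m = (n - m) + 1 from by omega]
  -- reindex the RHS products
  have hIcc1 : ∏ k ∈ Finset.Icc 1 m, (x (r + 1 + m) - x (r + 1 + m - k)) =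
      ∏ a ∈ range m, (x (r + 1 + m) - x (r + 1 + a)) := by
    rw [← Finset.Ico_add_one_right_eq_Icc, Finset.prod_Ico_eq_prod_range,
      ← Finset.prod_range_reflect (fun a => x (r + 1 + m) - x (r + 1 + a)) m]
    refine Finset.prod_congr (by simp) fun i hi => ?_
    have him := Finset.mem_range.mp hi
    rw [show r + 1 + m - (1 + i) = r + 1 + (m - 1 - i) from by omega]
  have hIcc2 : ∏ k ∈ Finset.Icc 2 (m + 1), (x (r + m) - x (r + 1 + m - k)) =
      ∏ a ∈ range m, (x (r + m) - x (r + a)) := by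
    rw [← Finset.Ico_add_one_right_eq_Icc, Finset.prod_Ico_eq_prod_range,
      ← Finset.prod_range_reflect (fun a => x (r + m) - x (r + a)) m]
    refine Finset.prod_congr (by rw [show m + 1 + 1 - 2 = m from by omega]) fun i hi => ?_
    have him := Finset.mem_range.mp hi
    rw [show r + 1 + m - (2 + i) = r + (m - 1 - i) from by omega]
  rw [hM1, hM2, hM3, hM4, hIcc1, hIcc2]
  -- nonzero facts
  have hA1 : (∏ a ∈ range m, (1 - x (r + 1 + a))) ≠ 0 :=
    Finset.prod_ne_zero_iff.mpr fun a ha =>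
      hne (r + 1 + a) (by omega) (by have := Finset.mem_range.mp ha; omega)
  have hu0 : 1 - x (r + m) ≠ 0 := hne (r + m) (by omega) (by omega)
  have hW0 : (∏ a ∈ range m, ∏ b ∈ Ico (a+1) m, (x (r + b) - x (r + a))) ≠ 0 := by
    refine Finset.prod_ne_zero_iff.mpr fun a ha => Finset.prod_ne_zero_iff.mpr fun b hb => ?_
    have ha' := Finset.mem_range.mp ha
    have hb' := Finset.mem_Ico.mp hb
    exact sub_ne_zero.mpr (ne_of_gt (hmono (r + a) (r + b) (by omega) (by omega) (by omega)))
  have hW1 : (∏ a ∈ range m, ∏ b ∈ Ico (a+1) m, (x (r + 1 + b) - x (r + 1 + a))) ≠ 0 := by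
    refine Finset.prod_ne_zero_iff.mpr fun a ha => Finset.prod_ne_zero_iff.mpr fun b hb => ?_
    have ha' := Finset.mem_range.mp ha
    have hb' := Finset.mem_Ico.mp hb
    exact sub_ne_zero.mpr (ne_of_gt (hmono (r + 1 + a) (r + 1 + b) (by omega) (by omega) (by omega)))
  have hG0 : (∏ a ∈ range m, (x (r + m) - x (r + a))) ≠ 0 := by
    refine Finset.prod_ne_zero_iff.mpr fun a ha => ?_
    have ha' := Finset.mem_range.mp ha
    exact sub_ne_zero.mpr (ne_of_gt (hmono (r + a) (r + m) (by omega) (by omega) (by omega)))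
  have hC0 : (∏ c ∈ range m, (n.choose c : ℝ)) ≠ 0 :=
    Finset.prod_ne_zero_iff.mpr fun c hc => Nat.cast_ne_zero.mpr
      (Nat.choose_pos (by have := Finset.mem_range.mp hc; omega)).ne'
  have hC1 : (∏ c ∈ range (m+1), (n.choose c : ℝ)) ≠ 0 :=
    Finset.prod_ne_zero_iff.mpr fun c hc => Nat.cast_ne_zero.mpr
      (Nat.choose_pos (by have := Finset.mem_range.mp hc; omega)).ne'
  -- telescoping identity
  have hT : (∏ a ∈ range m, (1 - x (r + a))) * (1 - x (r + m)) =
      (1 - x r) * ∏ a ∈ range m, (1 - x (r + 1 + a)) := by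
    rw [← Finset.prod_range_succ (fun a => 1 - x (r + a)) m,
      Finset.prod_range_succ' (fun a => 1 - x (r + a)) m, add_zero, mul_comm]
    congr 1
    exact Finset.prod_congr rfl fun a _ => by rw [show r + (a + 1) = r + 1 + a from by omega]
  have hA0eq : (∏ a ∈ range m, (1 - x (r + a))) =
      (1 - x r) * (∏ a ∈ range m, (1 - x (r + 1 + a))) / (1 - x (r + m)) := by
    rw [eq_div_iff hu0]; exact hT
  have hs : 1 - x r ≠ 0 := hne r hr1 (by omega)
  have hu1 : 1 - x (r + 1 + m) ≠ 0 := hne (r + 1 + m) (by omega) (by omega)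
  rw [hA0eq]
  simp only [div_pow, mul_pow]
  field_simp
  ring
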